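/- Let α > 0 and C > 0. If the heat trace satisfies θ(t) = C·t^{−α} + o(t^{−α}) as t → 0⁺, then the counting function satisfies N(λ) = (C/Γ(α+1))·λ^α + o(λ^α) as λ → ∞. -/

import Mathlib

open Filter Topology Set MeasureTheory Polynomial Asymptotics

namespace KaramataAux

noncomputable def th (l : ℕ → ℝ) (t : ℝ) : ℝ := ∑' k, Real.exp (-t * l k)

lemma finite_counting {l : ℕ → ℝ} (htop : Tendsto l atTop atTop) (x : ℝ) :
    {k : ℕ | l k ≤ x}.Finite := by
  have h : ∀ᶠ k in cofinite, x < l k := by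
    rw [Nat.cofinite_eq_atTop]; exact htop.eventually (eventually_gt_atTop x)
  simpa [not_lt] using Filter.eventually_cofinite.mp h

lemma summable_indicator {l : ℕ → ℝ} (htop : Tendsto l atTop atTop) (x : ℝ) :
    Summable (fun k => if l k ≤ x then (1:ℝ) else 0) := by
  apply summable_of_finite_support
  apply (finite_counting htop x).subset
  intro k hk
  simp only [Function.mem_support] at hk
  by_contra h
  simp only [Set.mem_setOf_eq] at h
  exact hk (by simp [h])

lemma card_eq_tsum {l : ℕ → ℝ} (htop : Tendsto l atTop atTop) (x : ℝ) :
    (Nat.card {k : ℕ | l k ≤ x} : ℝ) = ∑' k, (if l k ≤ x then (1:ℝ) else 0) := by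
  have hS := finite_counting htop x
  haveI := hS.fintype
  rw [Nat.card_eq_card_toFinset]
  rw [tsum_eq_sum (s := hS.toFinset) (f := fun k => if l k ≤ x then (1:ℝ) else 0) (by
    intro k hk
    simp only [Set.Finite.mem_toFinset, Set.mem_setOf_eq] at hk
    simp [hk])]
  rw [Finset.sum_congr rfl (fun k hk => show (if l k ≤ x then (1:ℝ) else 0) = 1 by
    simp only [Set.Finite.mem_toFinset, Set.mem_setOf_eq] at hk
    simp [hk])]
  rw [Finset.sum_const, nsmul_eq_mul, mul_one]
  norm_cast
  rw [Set.Finite.card_toFinset]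
  simp [Set.toFinset_card]


lemma tendsto_rpow_mul_th {l : ℕ → ℝ} {α C : ℝ}
    (hθ : (fun t : ℝ => th l t - C * t ^ (-α)) =o[𝓝[>] (0:ℝ)] fun t : ℝ => t ^ (-α)) :
    Tendsto (fun t => t ^ α * th l t) (𝓝[>] (0:ℝ)) (𝓝 C) := by
  have h1 := hθ.tendsto_div_nhds_zero
  have h2 : ∀ᶠ t in 𝓝[>] (0:ℝ),
      (th l t - C * t ^ (-α)) / t ^ (-α) = t ^ α * th l t - C := by
    filter_upwards [self_mem_nhdsWithin] with t ht
    have ht' : (0:ℝ) < t := ht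
    have hp : (0:ℝ) < t ^ α := Real.rpow_pos_of_pos ht' α
    rw [Real.rpow_neg ht'.le]
    field_simp
  rw [← tendsto_sub_nhds_zero_iff]
  exact (h1.congr' h2)

lemma tendsto_scaled {l : ℕ → ℝ} {α C : ℝ}
    (hbase : Tendsto (fun t => t ^ α * th l t) (𝓝[>] (0:ℝ)) (𝓝 C))
    (n : ℕ) (hn : 0 < n) :
    Tendsto (fun t => t ^ α * th l ((n:ℝ) * t)) (𝓝[>] (0:ℝ))
      (𝓝 (C / (n:ℝ) ^ α)) := by
  have hnpos : (0:ℝ) < (n:ℝ) := Nat.cast_pos.2 hn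
  have hmap : Tendsto (fun t : ℝ => (n:ℝ) * t) (𝓝[>] (0:ℝ)) (𝓝[>] (0:ℝ)) := by
    rw [tendsto_nhdsWithin_iff]
    constructor
    · have : Tendsto (fun t : ℝ => (n:ℝ) * t) (𝓝 (0:ℝ)) (𝓝 ((n:ℝ) * 0)) :=
        (continuous_const.mul continuous_id).tendsto 0
      simpa using this.mono_left nhdsWithin_le_nhds
    · filter_upwards [self_mem_nhdsWithin] with t ht
      exact mul_pos hnpos ht
  have h := (hbase.comp hmap).const_mul (((n:ℝ) ^ α)⁻¹)
  have heq : ∀ᶠ t in 𝓝[>] (0:ℝ),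
      ((n:ℝ) ^ α)⁻¹ * (((n:ℝ) * t) ^ α * th l ((n:ℝ) * t)) = t ^ α * th l ((n:ℝ) * t) := by
    filter_upwards [self_mem_nhdsWithin] with t ht
    have ht' : (0:ℝ) < t := ht
    rw [Real.mul_rpow hnpos.le ht'.le, ← mul_assoc, ← mul_assoc,
      inv_mul_cancel₀ (Real.rpow_pos_of_pos hnpos α).ne', one_mul]
  have := h.congr' heq
  rwa [inv_mul_eq_div] at this


noncomputable def polyBound (P : ℝ[X]) : ℝ :=
  ∑ i ∈ Finset.range (P.natDegree + 1), |P.coeff i|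

lemma abs_eval_le (P : ℝ[X]) {x : ℝ} (h0 : 0 ≤ x) (h1 : x ≤ 1) :
    |P.eval x| ≤ polyBound P := by
  rw [eval_eq_sum_range]
  refine (Finset.abs_sum_le_sum_abs _ _).trans ?_
  apply Finset.sum_le_sum
  intro i _
  rw [abs_mul]
  calc |P.coeff i| * |x ^ i| ≤ |P.coeff i| * 1 := by
        refine mul_le_mul_of_nonneg_left ?_ (abs_nonneg _)
        rw [abs_pow]
        exact pow_le_one₀ (abs_nonneg _) (abs_le.2 ⟨by linarith, h1⟩)
    _ = |P.coeff i| := mul_one _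

lemma exp_le_one_aux {l : ℕ → ℝ} (hpos : ∀ k, 0 ≤ l k) {t : ℝ} (ht : 0 < t) (k : ℕ) :
    Real.exp (-t * l k) ≤ 1 := by
  rw [Real.exp_le_one_iff]
  have := mul_nonneg ht.le (hpos k)
  linarith

lemma summable_poly {l : ℕ → ℝ} (hsum : ∀ t : ℝ, 0 < t → Summable fun k => Real.exp (-t * l k))
    (hpos : ∀ k, 0 ≤ l k) {t : ℝ} (ht : 0 < t) (P : ℝ[X]) :
    Summable (fun k => Real.exp (-t * l k) * P.eval (Real.exp (-t * l k))) := by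
  apply Summable.of_norm_bounded (g := fun k => polyBound P * Real.exp (-t * l k))
    ((hsum t ht).mul_left _)
  intro k
  rw [Real.norm_eq_abs, abs_mul, abs_of_pos (Real.exp_pos _), mul_comm]
  exact mul_le_mul_of_nonneg_right
    (abs_eval_le P (Real.exp_pos _).le (exp_le_one_aux hpos ht k)) (Real.exp_pos _).le

lemma tsum_poly {l : ℕ → ℝ} (hsum : ∀ t : ℝ, 0 < t → Summable fun k => Real.exp (-t * l k))
    {t : ℝ} (ht : 0 < t) (P : ℝ[X]) :
    ∑' k, Real.exp (-t * l k) * P.eval (Real.exp (-t * l k))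
      = ∑ i ∈ Finset.range (P.natDegree + 1), P.coeff i * th l (((i:ℝ) + 1) * t) := by
  have hterm : ∀ k, Real.exp (-t * l k) * P.eval (Real.exp (-t * l k))
      = ∑ i ∈ Finset.range (P.natDegree + 1),
          P.coeff i * Real.exp (-((((i:ℕ):ℝ) + 1) * t) * l k) := by
    intro k
    rw [eval_eq_sum_range, Finset.mul_sum]
    apply Finset.sum_congr rfl
    intro i _
    have h : Real.exp (-((((i:ℕ):ℝ) + 1) * t) * l k) = Real.exp (-t * l k) ^ (i + 1) := by
      rw [← Real.exp_nat_mul]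
      congr 1
      push_cast
      ring
    rw [h, pow_succ]
    ring
  rw [tsum_congr hterm, Summable.tsum_finsetSum (f := fun i k => P.coeff i * Real.exp (-(((i:ℝ) + 1) * t) * l k))
    (fun i _ => ((hsum (((i:ℝ) + 1) * t) (by positivity)).mul_left _))]
  apply Finset.sum_congr rfl
  intro i _
  rw [tsum_mul_left]
  rfl

lemma tendsto_tsum_poly {l : ℕ → ℝ} {α C : ℝ}
    (hsum : ∀ t : ℝ, 0 < t → Summable fun k => Real.exp (-t * l k))
    (hbase : Tendsto (fun t => t ^ α * th l t) (𝓝[>] (0:ℝ)) (𝓝 C)) (P : ℝ[X]) :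
    Tendsto (fun t => t ^ α * ∑' k, Real.exp (-t * l k) * P.eval (Real.exp (-t * l k)))
      (𝓝[>] (0:ℝ))
      (𝓝 (C * ∑ i ∈ Finset.range (P.natDegree + 1), P.coeff i / ((i:ℝ) + 1) ^ α)) := by
  have h1 : Tendsto (fun t => ∑ i ∈ Finset.range (P.natDegree + 1),
      P.coeff i * (t ^ α * th l (((i:ℝ) + 1) * t))) (𝓝[>] (0:ℝ))
      (𝓝 (∑ i ∈ Finset.range (P.natDegree + 1), P.coeff i * (C / ((i:ℝ) + 1) ^ α))) := by
    apply tendsto_finset_sum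
    intro i _
    have hc : ((i:ℝ) + 1) = ((i + 1 : ℕ) : ℝ) := by push_cast; ring
    have := (tendsto_scaled hbase (i + 1) (Nat.succ_pos i)).const_mul (P.coeff i)
    rw [← hc] at this
    exact this
  have heq : ∀ᶠ t in 𝓝[>] (0:ℝ), (∑ i ∈ Finset.range (P.natDegree + 1),
      P.coeff i * (t ^ α * th l (((i:ℝ) + 1) * t)))
      = t ^ α * ∑' k, Real.exp (-t * l k) * P.eval (Real.exp (-t * l k)) := by
    filter_upwards [self_mem_nhdsWithin] with t ht
    rw [tsum_poly hsum ht P, Finset.mul_sum]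
    apply Finset.sum_congr rfl
    intro i _
    ring
  have h2 := h1.congr' heq
  convert h2 using 2
  rw [Finset.mul_sum]
  apply Finset.sum_congr rfl
  intro i _
  rw [div_eq_mul_inv, div_eq_mul_inv]
  ring


lemma continuousOn_rpow_aux {α : ℝ} : ContinuousOn (fun y : ℝ => y ^ (α - 1)) (Ioi (0:ℝ)) :=
  fun y hy => (Real.continuousAt_rpow_const y (α - 1) (Or.inl (ne_of_gt hy))).continuousWithinAt

lemma integrableOn_rpow_exp {α : ℝ} (hα : 0 < α) {r : ℝ} (hr : 1 ≤ r) :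
    IntegrableOn (fun y : ℝ => y ^ (α - 1) * Real.exp (-(r * y))) (Ioi (0:ℝ)) := by
  apply Integrable.mono (Real.GammaIntegral_convergent hα)
  · apply ContinuousOn.aestronglyMeasurable _ measurableSet_Ioi
    exact continuousOn_rpow_aux.mul ((Real.continuous_exp.comp
      ((continuous_const.mul continuous_id).neg)).continuousOn)
  · rw [ae_restrict_iff' measurableSet_Ioi]
    filter_upwards with y hy
    have hy' : (0:ℝ) < y := hy
    have h1 : (0:ℝ) < y ^ (α - 1) := Real.rpow_pos_of_pos hy' _
    rw [Real.norm_eq_abs, Real.norm_eq_abs, abs_mul, abs_of_pos h1,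
      abs_of_pos (Real.exp_pos _), abs_mul, abs_of_pos (Real.exp_pos _), abs_of_pos h1,
      mul_comm (Real.exp (-y))]
    apply mul_le_mul_of_nonneg_left _ h1.le
    apply Real.exp_le_exp.2
    nlinarith

lemma integrableOn_exp_poly {α : ℝ} (hα : 0 < α) (R : ℝ[X]) :
    IntegrableOn (fun y : ℝ => Real.exp (-y) * R.eval (Real.exp (-y)) * y ^ (α - 1))
      (Ioi (0:ℝ)) := by
  apply Integrable.mono ((Real.GammaIntegral_convergent hα).const_mul (polyBound R))
  · apply ContinuousOn.aestronglyMeasurable _ measurableSet_Ioi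
    apply ContinuousOn.mul _ continuousOn_rpow_aux
    exact ((Real.continuous_exp.comp continuous_neg).mul
      ((R.continuous_aeval.comp (Real.continuous_exp.comp continuous_neg)))).continuousOn
  · rw [ae_restrict_iff' measurableSet_Ioi]
    filter_upwards with y hy
    have hy' : (0:ℝ) < y := hy
    have h1 : (0:ℝ) < y ^ (α - 1) := Real.rpow_pos_of_pos hy' _
    have hx0 : (0:ℝ) < Real.exp (-y) := Real.exp_pos _
    have hx1 : Real.exp (-y) ≤ 1 := Real.exp_le_one_iff.2 (by linarith)
    rw [Real.norm_eq_abs, Real.norm_eq_abs, abs_mul, abs_mul, abs_of_pos h1,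
      abs_of_pos hx0]
    have hb := abs_eval_le R hx0.le hx1
    have hbnn : 0 ≤ polyBound R := (abs_nonneg _).trans hb
    rw [abs_mul, abs_of_nonneg hbnn, abs_mul, abs_of_pos (Real.exp_pos _), abs_of_pos h1]
    calc Real.exp (-y) * |eval (Real.exp (-y)) R| * y ^ (α - 1)
        ≤ Real.exp (-y) * polyBound R * y ^ (α - 1) := by
          apply mul_le_mul_of_nonneg_right _ h1.le
          exact mul_le_mul_of_nonneg_left hb hx0.le
      _ = polyBound R * (Real.exp (-y) * y ^ (α - 1)) := by ring

lemma integral_exp_poly {α : ℝ} (hα : 0 < α) (R : ℝ[X]) :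
    ∫ y in Ioi (0:ℝ), Real.exp (-y) * R.eval (Real.exp (-y)) * y ^ (α - 1)
      = Real.Gamma α * ∑ i ∈ Finset.range (R.natDegree + 1), R.coeff i / ((i:ℝ) + 1) ^ α := by
  have h1 : ∀ y ∈ Ioi (0:ℝ), Real.exp (-y) * R.eval (Real.exp (-y)) * y ^ (α - 1)
      = ∑ i ∈ Finset.range (R.natDegree + 1),
          R.coeff i * (y ^ (α - 1) * Real.exp (-(((i:ℝ) + 1) * y))) := by
    intro y _
    rw [eval_eq_sum_range, Finset.mul_sum, Finset.sum_mul]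
    apply Finset.sum_congr rfl
    intro i _
    have h : Real.exp (-(((i:ℝ) + 1) * y)) = Real.exp (-y) ^ (i + 1) := by
      rw [← Real.exp_nat_mul]
      congr 1
      push_cast
      ring
    rw [h, pow_succ]
    ring
  rw [setIntegral_congr_fun measurableSet_Ioi h1, integral_finset_sum]
  · rw [Finset.mul_sum]
    apply Finset.sum_congr rfl
    intro i _
    rw [MeasureTheory.integral_const_mul,
      Real.integral_rpow_mul_exp_neg_mul_Ioi hα (by positivity : (0:ℝ) < (i:ℝ) + 1)]
    rw [one_div, Real.inv_rpow (by positivity)]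
    rw [div_eq_mul_inv]
    ring
  · intro i _
    exact (integrableOn_rpow_exp hα (by push_cast; linarith [Nat.cast_nonneg (α := ℝ) i]
      : (1:ℝ) ≤ (i:ℝ) + 1)).const_mul _

lemma integrableOn_ind {α : ℝ} (hα : 0 < α) {c : ℝ} :
    IntegrableOn (fun y : ℝ => y ^ (α - 1)) (Ioc (0:ℝ) c) := by
  have := (intervalIntegral.intervalIntegrable_rpow' (a := 0) (b := c)
    (by linarith : (-1:ℝ) < α - 1))
  exact this.1

open intervalIntegral in
lemma integral_ind {α : ℝ} (hα : 0 < α) {c : ℝ} (hc : 0 ≤ c) :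
    ∫ y in Ioc (0:ℝ) c, y ^ (α - 1) = c ^ α / α := by
  rw [← integral_of_le hc, integral_rpow (Or.inl (by linarith : (-1:ℝ) < α - 1))]
  rw [show α - 1 + 1 = α by ring, Real.zero_rpow hα.ne']
  ring


noncomputable def ramp (d s x : ℝ) : ℝ := min 1 (max 0 ((x - s) / d))

lemma ramp_nonneg (d s x : ℝ) : 0 ≤ ramp d s x :=
  le_min zero_le_one (le_max_left 0 _)

lemma ramp_le_one (d s x : ℝ) : ramp d s x ≤ 1 := min_le_left _ _

lemma ramp_eq_zero {d s x : ℝ} (hd : 0 < d) (hx : x ≤ s) : ramp d s x = 0 := by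
  have h : (x - s) / d ≤ 0 := div_nonpos_of_nonpos_of_nonneg (by linarith) hd.le
  rw [ramp, max_eq_left h, min_eq_right zero_le_one]

lemma ramp_eq_one {d s x : ℝ} (hd : 0 < d) (hx : s + d ≤ x) : ramp d s x = 1 := by
  have h : (1:ℝ) ≤ (x - s) / d := (one_le_div hd).2 (by linarith)
  rw [ramp, min_eq_left (h.trans (le_max_right 0 _))]

noncomputable def rampW (d s s₀ x : ℝ) : ℝ := ramp d s x * (max x s₀)⁻¹

lemma continuous_rampW {d s s₀ : ℝ} (hs₀ : 0 < s₀) : Continuous (rampW d s s₀) := by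
  apply Continuous.mul
  · exact continuous_const.min (continuous_const.max ((continuous_id.sub continuous_const).div_const d))
  · exact (continuous_id.max continuous_const).inv₀
      (fun x => (lt_of_lt_of_le hs₀ (le_max_right x s₀)).ne')

lemma mul_rampW {d s s₀ x : ℝ} (hd : 0 < d) (hs₀ : 0 < s₀) (hss : s₀ ≤ s) (hx : 0 ≤ x) :
    x * rampW d s s₀ x = ramp d s x := by
  rcases le_or_gt s₀ x with h | h
  · have hx0 : 0 < x := lt_of_lt_of_le hs₀ h
    rw [rampW, max_eq_left h, mul_comm (ramp d s x), ← mul_assoc,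
      mul_inv_cancel₀ hx0.ne', one_mul]
  · rw [rampW, ramp_eq_zero hd (h.le.trans hss), zero_mul, mul_zero]

lemma sandwich_low {l : ℕ → ℝ} (htop : Tendsto l atTop atTop)
    (hsum : ∀ t : ℝ, 0 < t → Summable fun k => Real.exp (-t * l k))
    (hpos : ∀ k, 0 ≤ l k) {t : ℝ} (ht : 0 < t) (R : ℝ[X])
    (hle : ∀ x : ℝ, 0 < x → x ≤ 1 → x * R.eval x ≤ (if Real.exp (-1) ≤ x then (1:ℝ) else 0)) :
    ∑' k, Real.exp (-t * l k) * R.eval (Real.exp (-t * l k))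
      ≤ (Nat.card {k : ℕ | l k ≤ 1 / t} : ℝ) := by
  rw [card_eq_tsum htop]
  apply Summable.tsum_le_tsum _ (summable_poly hsum hpos ht R) (summable_indicator htop _)
  intro k
  have hx0 := Real.exp_pos (-t * l k)
  have hx1 := exp_le_one_aux hpos ht k
  have hiff : (Real.exp (-1) ≤ Real.exp (-t * l k)) = (l k ≤ 1 / t) := by
    rw [eq_iff_iff, Real.exp_le_exp, le_div_iff₀ ht]
    constructor <;> intro h <;> nlinarith
  rw [if_congr (iff_of_eq hiff.symm) rfl rfl]
  exact hle _ hx0 hx1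

lemma sandwich_high {l : ℕ → ℝ} (htop : Tendsto l atTop atTop)
    (hsum : ∀ t : ℝ, 0 < t → Summable fun k => Real.exp (-t * l k))
    (hpos : ∀ k, 0 ≤ l k) {t : ℝ} (ht : 0 < t) (R : ℝ[X])
    (hge : ∀ x : ℝ, 0 < x → x ≤ 1 → (if Real.exp (-1) ≤ x then (1:ℝ) else 0) ≤ x * R.eval x) :
    (Nat.card {k : ℕ | l k ≤ 1 / t} : ℝ)
      ≤ ∑' k, Real.exp (-t * l k) * R.eval (Real.exp (-t * l k)) := by
  rw [card_eq_tsum htop]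
  apply Summable.tsum_le_tsum _ (summable_indicator htop _) (summable_poly hsum hpos ht R)
  intro k
  have hx0 := Real.exp_pos (-t * l k)
  have hx1 := exp_le_one_aux hpos ht k
  have hiff : (Real.exp (-1) ≤ Real.exp (-t * l k)) = (l k ≤ 1 / t) := by
    rw [eq_iff_iff, Real.exp_le_exp, le_div_iff₀ ht]
    constructor <;> intro h <;> nlinarith
  rw [if_congr (iff_of_eq hiff.symm) rfl rfl]
  exact hge _ hx0 hx1


lemma J_lower {α : ℝ} (hα : 0 < α) {c d2 : ℝ} (hc : 0 ≤ c) (R : ℝ[X])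
    (hpt : ∀ y : ℝ, 0 < y → (Iic c).indicator (fun y : ℝ => y ^ (α - 1)) y
        - 2 * d2 * (y ^ (α - 1) * Real.exp (-(1 * y)))
        ≤ Real.exp (-y) * R.eval (Real.exp (-y)) * y ^ (α - 1)) :
    c ^ α / α - 2 * d2 * Real.Gamma α
      ≤ Real.Gamma α * ∑ i ∈ Finset.range (R.natDegree + 1), R.coeff i / ((i:ℝ) + 1) ^ α := by
  rw [← integral_exp_poly hα R]
  have hind : IntegrableOn ((Iic c).indicator fun y : ℝ => y ^ (α - 1)) (Ioi (0:ℝ)) := by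
    rw [IntegrableOn, integrable_indicator_iff measurableSet_Iic, IntegrableOn,
      Measure.restrict_restrict measurableSet_Iic, Set.inter_comm, Set.Ioi_inter_Iic]
    exact integrableOn_ind hα
  have hexp : IntegrableOn (fun y : ℝ => 2 * d2 * (y ^ (α - 1) * Real.exp (-(1 * y))))
      (Ioi (0:ℝ)) := (integrableOn_rpow_exp hα le_rfl).const_mul _
  have hmono := setIntegral_mono_on (hind.sub hexp) (integrableOn_exp_poly hα R)
    measurableSet_Ioi (fun y hy => hpt y hy)
  simp only [Pi.sub_apply] at hmono
  rw [MeasureTheory.integral_sub hind hexp, setIntegral_indicator measurableSet_Iic,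
    Set.Ioi_inter_Iic, integral_ind hα hc, MeasureTheory.integral_const_mul,
    Real.integral_rpow_mul_exp_neg_mul_Ioi hα one_pos] at hmono
  rw [show ((1:ℝ)/1) ^ α = 1 by norm_num] at hmono
  linarith

lemma J_upper {α : ℝ} (hα : 0 < α) {c d2 : ℝ} (hc : 0 ≤ c) (R : ℝ[X])
    (hpt : ∀ y : ℝ, 0 < y → Real.exp (-y) * R.eval (Real.exp (-y)) * y ^ (α - 1)
        ≤ (Iic c).indicator (fun y : ℝ => y ^ (α - 1)) y
          + 2 * d2 * (y ^ (α - 1) * Real.exp (-(1 * y)))) :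
    Real.Gamma α * ∑ i ∈ Finset.range (R.natDegree + 1), R.coeff i / ((i:ℝ) + 1) ^ α
      ≤ c ^ α / α + 2 * d2 * Real.Gamma α := by
  rw [← integral_exp_poly hα R]
  have hind : IntegrableOn ((Iic c).indicator fun y : ℝ => y ^ (α - 1)) (Ioi (0:ℝ)) := by
    rw [IntegrableOn, integrable_indicator_iff measurableSet_Iic, IntegrableOn,
      Measure.restrict_restrict measurableSet_Iic, Set.inter_comm, Set.Ioi_inter_Iic]
    exact integrableOn_ind hα
  have hexp : IntegrableOn (fun y : ℝ => 2 * d2 * (y ^ (α - 1) * Real.exp (-(1 * y))))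
      (Ioi (0:ℝ)) := (integrableOn_rpow_exp hα le_rfl).const_mul _
  have hmono := setIntegral_mono_on (integrableOn_exp_poly hα R) (hind.add hexp)
    measurableSet_Ioi (fun y hy => hpt y hy)
  simp only [Pi.add_apply] at hmono
  rw [MeasureTheory.integral_add hind hexp, setIntegral_indicator measurableSet_Iic,
    Set.Ioi_inter_Iic, integral_ind hα hc, MeasureTheory.integral_const_mul,
    Real.integral_rpow_mul_exp_neg_mul_Ioi hα one_pos] at hmono
  rw [show ((1:ℝ)/1) ^ α = 1 by norm_num] at hmono
  linarith


set_option maxHeartbeats 3000000 in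
lemma main {l : ℕ → ℝ} {α C : ℝ} (htop : Tendsto l atTop atTop)
    (hsum : ∀ t : ℝ, 0 < t → Summable fun k => Real.exp (-t * l k))
    (hpos : ∀ k, 0 ≤ l k) (hα : 0 < α) (hC : 0 < C)
    (hθ : (fun t : ℝ => th l t - C * t ^ (-α)) =o[𝓝[>] (0:ℝ)] fun t : ℝ => t ^ (-α)) :
    Tendsto (fun t : ℝ => t ^ α * (Nat.card {k : ℕ | l k ≤ 1 / t} : ℝ)) (𝓝[>] (0:ℝ))
      (𝓝 (C / Real.Gamma (α + 1))) := by
  have hbase := tendsto_rpow_mul_th hθ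
  have hΓpos : 0 < Real.Gamma α := Real.Gamma_pos_of_pos hα
  have hΓ1 : Real.Gamma (α + 1) = α * Real.Gamma α := Real.Gamma_add_one hα.ne'
  set L := C / Real.Gamma (α + 1) with hL
  have hLpos : 0 < L := div_pos hC (by rw [hΓ1]; positivity)
  have ha0 : (0:ℝ) < Real.exp (-1) := Real.exp_pos _
  have ha1 : Real.exp (-1) < 2/5 := by
    have h := Real.exp_one_gt_d9
    rw [Real.exp_neg, inv_lt_comm₀ (Real.exp_pos 1) (by norm_num)]
    nlinarith
  rw [Metric.tendsto_nhds]
  intro ε hε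
  -- choose the ramp width δ
  have hc2 : Tendsto (fun d : ℝ => L * (-Real.log (Real.exp (-1) - 2 * d)) ^ α)
      (𝓝 (0:ℝ)) (𝓝 L) := by
    have c1 : Tendsto (fun d : ℝ => Real.exp (-1) - 2 * d) (𝓝 (0:ℝ)) (𝓝 (Real.exp (-1))) := by
      simpa using ((by continuity : Continuous fun d : ℝ => Real.exp (-1) - 2 * d).tendsto 0)
    have c2 : Tendsto (fun d : ℝ => -Real.log (Real.exp (-1) - 2 * d)) (𝓝 (0:ℝ)) (𝓝 1) := by
      have h2 := ((Real.continuousAt_log ha0.ne').tendsto.comp c1).neg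
      simpa [Real.log_exp] using h2
    have c3 := ((Real.continuousAt_rpow_const 1 α (Or.inl one_ne_zero)).tendsto.comp c2)
    rw [Real.one_rpow] at c3
    simpa using c3.const_mul L
  have hc1 : Tendsto (fun d : ℝ => L * (-Real.log (Real.exp (-1) + 2 * d)) ^ α)
      (𝓝 (0:ℝ)) (𝓝 L) := by
    have c1 : Tendsto (fun d : ℝ => Real.exp (-1) + 2 * d) (𝓝 (0:ℝ)) (𝓝 (Real.exp (-1))) := by
      simpa using ((by continuity : Continuous fun d : ℝ => Real.exp (-1) + 2 * d).tendsto 0)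
    have c2 : Tendsto (fun d : ℝ => -Real.log (Real.exp (-1) + 2 * d)) (𝓝 (0:ℝ)) (𝓝 1) := by
      have h2 := ((Real.continuousAt_log ha0.ne').tendsto.comp c1).neg
      simpa [Real.log_exp] using h2
    have c3 := ((Real.continuousAt_rpow_const 1 α (Or.inl one_ne_zero)).tendsto.comp c2)
    rw [Real.one_rpow] at c3
    simpa using c3.const_mul L
  have hev2 : ∀ᶠ d in 𝓝[>] (0:ℝ), L * (-Real.log (Real.exp (-1) - 2 * d)) ^ α < L + ε/4 :=
    (hc2.mono_left nhdsWithin_le_nhds).eventually_lt_const (by linarith)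
  have hev1 : ∀ᶠ d in 𝓝[>] (0:ℝ), L - ε/4 < L * (-Real.log (Real.exp (-1) + 2 * d)) ^ α :=
    (hc1.mono_left nhdsWithin_le_nhds).eventually_const_lt (by linarith)
  have hev3 : ∀ᶠ d in 𝓝[>] (0:ℝ), d ∈ Ioc (0:ℝ) (Real.exp (-1) / 8) :=
    Ioc_mem_nhdsGT_of_mem ⟨le_refl 0, by positivity⟩
  obtain ⟨δ, hδ2, hδ1, hδm⟩ := (hev2.and (hev1.and hev3)).exists
  obtain ⟨hδpos, hδsmall⟩ := hδm
  -- basic facts about the chosen parameters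
  have hs₀ : (0:ℝ) < Real.exp (-1) - 2 * δ := by linarith
  have hsum1 : Real.exp (-1) + 2 * δ ≤ 1 := by linarith
  set y₁ := -Real.log (Real.exp (-1) + 2 * δ) with hy₁def
  set y₂ := -Real.log (Real.exp (-1) - 2 * δ) with hy₂def
  have hy₁0 : 0 ≤ y₁ := by
    rw [hy₁def, neg_nonneg]
    exact Real.log_nonpos (by linarith) hsum1
  have hy₂0 : 0 ≤ y₂ := by
    rw [hy₂def, neg_nonneg]
    exact Real.log_nonpos (by linarith) (by linarith)
  set δ₂ := ε / (16 * (C + 1)) with hδ₂def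
  have hδ₂pos : 0 < δ₂ := by rw [hδ₂def]; positivity
  have hδ₂C : 2 * δ₂ * C ≤ ε / 8 := by
    have key : ε / (16 * (C + 1)) * (16 * (C + 1)) = ε := div_mul_cancel₀ _ (by positivity)
    have hq : 0 < ε / (16 * (C + 1)) := by positivity
    rw [hδ₂def]
    nlinarith [key, hq]
  -- Weierstrass approximations
  obtain ⟨P, hP⟩ := exists_polynomial_near_of_continuousOn 0 1
    (rampW δ (Real.exp (-1) + δ) (Real.exp (-1) - 2 * δ))
    (continuous_rampW hs₀).continuousOn δ₂ hδ₂pos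
  obtain ⟨Q, hQ⟩ := exists_polynomial_near_of_continuousOn 0 1
    (rampW δ (Real.exp (-1) - 2 * δ) (Real.exp (-1) - 2 * δ))
    (continuous_rampW hs₀).continuousOn δ₂ hδ₂pos
  set Rm := P - Polynomial.C δ₂ with hRmdef
  set Rp := Q + Polynomial.C δ₂ with hRpdef
  have hRmeval : ∀ x : ℝ, Rm.eval x = P.eval x - δ₂ := by
    intro x; rw [hRmdef]; simp
  have hRpeval : ∀ x : ℝ, Rp.eval x = Q.eval x + δ₂ := by
    intro x; rw [hRpdef]; simp
  have hlimp := tendsto_tsum_poly hsum hbase Rm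
  have hlimq := tendsto_tsum_poly hsum hbase Rp
  set Vm := ∑ i ∈ Finset.range (Rm.natDegree + 1), Rm.coeff i / ((i:ℝ) + 1) ^ α with hVmdef
  set Vp := ∑ i ∈ Finset.range (Rp.natDegree + 1), Rp.coeff i / ((i:ℝ) + 1) ^ α with hVpdef
  -- pointwise bounds on [0,1]
  have hle : ∀ x : ℝ, 0 < x → x ≤ 1 →
      x * Rm.eval x ≤ (if Real.exp (-1) ≤ x then (1:ℝ) else 0) := by
    intro x hx0 hx1
    have hPx := hP x ⟨hx0.le, hx1⟩
    rw [abs_lt] at hPx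
    have hxW := mul_rampW (s := Real.exp (-1) + δ) (s₀ := Real.exp (-1) - 2 * δ)
      hδpos hs₀ (by linarith) hx0.le
    have h1 : x * Rm.eval x ≤ ramp δ (Real.exp (-1) + δ) x := by
      rw [hRmeval, ← hxW]
      nlinarith [hPx.2]
    refine h1.trans ?_
    by_cases hax : Real.exp (-1) ≤ x
    · rw [if_pos hax]; exact ramp_le_one _ _ _
    · rw [if_neg hax, ramp_eq_zero hδpos (by push_neg at hax; linarith)]
  have hge : ∀ x : ℝ, 0 < x → x ≤ 1 →
      (if Real.exp (-1) ≤ x then (1:ℝ) else 0) ≤ x * Rp.eval x := by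
    intro x hx0 hx1
    have hQx := hQ x ⟨hx0.le, hx1⟩
    rw [abs_lt] at hQx
    have hxW := mul_rampW (s := Real.exp (-1) - 2 * δ) (s₀ := Real.exp (-1) - 2 * δ)
      hδpos hs₀ le_rfl hx0.le
    have h1 : ramp δ (Real.exp (-1) - 2 * δ) x ≤ x * Rp.eval x := by
      rw [hRpeval, ← hxW]
      nlinarith [hQx.1]
    refine le_trans ?_ h1
    by_cases hax : Real.exp (-1) ≤ x
    · rw [if_pos hax, ramp_eq_one hδpos (by linarith)]
    · rw [if_neg hax]; exact ramp_nonneg _ _ _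
  -- integral bounds
  have hJm : y₁ ^ α / α - 2 * δ₂ * Real.Gamma α ≤ Real.Gamma α * Vm := by
    rw [hVmdef]
    apply J_lower hα hy₁0
    intro y hy
    have hx0 : (0:ℝ) < Real.exp (-y) := Real.exp_pos _
    have hx1 : Real.exp (-y) ≤ 1 := Real.exp_le_one_iff.2 (by linarith)
    have hyp : (0:ℝ) ≤ y ^ (α - 1) := (Real.rpow_pos_of_pos hy _).le
    have hPx := hP (Real.exp (-y)) ⟨hx0.le, hx1⟩
    rw [abs_lt] at hPx
    have hxW := mul_rampW (s := Real.exp (-1) + δ) (s₀ := Real.exp (-1) - 2 * δ)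
      (x := Real.exp (-y)) hδpos hs₀ (by linarith) hx0.le
    have h5 : ramp δ (Real.exp (-1) + δ) (Real.exp (-y)) - 2 * δ₂ * Real.exp (-y)
        ≤ Real.exp (-y) * Rm.eval (Real.exp (-y)) := by
      rw [hRmeval, ← hxW]
      nlinarith [hPx.1]
    have hind : (Iic y₁).indicator (fun y : ℝ => y ^ (α - 1)) y
        ≤ ramp δ (Real.exp (-1) + δ) (Real.exp (-y)) * y ^ (α - 1) := by
      by_cases hyy : y ≤ y₁
      · rw [Set.indicator_of_mem (mem_Iic.2 hyy)]
        have hxe : Real.exp (-1) + 2 * δ ≤ Real.exp (-y) := by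
          have := Real.exp_le_exp.2 (neg_le_neg hyy)
          rwa [hy₁def, neg_neg, Real.exp_log (by linarith)] at this
        rw [ramp_eq_one hδpos (by linarith)]
        linarith
      · rw [Set.indicator_of_notMem (by simpa using hyy)]
        exact mul_nonneg (ramp_nonneg _ _ _) hyp
    have h6 := mul_le_mul_of_nonneg_right h5 hyp
    rw [one_mul]
    nlinarith
  have hJp : Real.Gamma α * Vp ≤ y₂ ^ α / α + 2 * δ₂ * Real.Gamma α := by
    rw [hVpdef]
    apply J_upper hα hy₂0
    intro y hy
    have hx0 : (0:ℝ) < Real.exp (-y) := Real.exp_pos _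
    have hx1 : Real.exp (-y) ≤ 1 := Real.exp_le_one_iff.2 (by linarith)
    have hyp : (0:ℝ) ≤ y ^ (α - 1) := (Real.rpow_pos_of_pos hy _).le
    have hQx := hQ (Real.exp (-y)) ⟨hx0.le, hx1⟩
    rw [abs_lt] at hQx
    have hxW := mul_rampW (s := Real.exp (-1) - 2 * δ) (s₀ := Real.exp (-1) - 2 * δ)
      (x := Real.exp (-y)) hδpos hs₀ le_rfl hx0.le
    have h5 : Real.exp (-y) * Rp.eval (Real.exp (-y))
        ≤ ramp δ (Real.exp (-1) - 2 * δ) (Real.exp (-y)) + 2 * δ₂ * Real.exp (-y) := by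
      rw [hRpeval, ← hxW]
      nlinarith [hQx.2]
    have hind : ramp δ (Real.exp (-1) - 2 * δ) (Real.exp (-y)) * y ^ (α - 1)
        ≤ (Iic y₂).indicator (fun y : ℝ => y ^ (α - 1)) y := by
      by_cases hyy : y ≤ y₂
      · rw [Set.indicator_of_mem (mem_Iic.2 hyy)]
        exact (mul_le_mul_of_nonneg_right (ramp_le_one _ _ _) hyp).trans (by rw [one_mul])
      · rw [Set.indicator_of_notMem (by simpa using hyy)]
        push_neg at hyy
        have hxe : Real.exp (-y) ≤ Real.exp (-1) - 2 * δ := by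
          have := Real.exp_le_exp.2 (neg_le_neg hyy.le)
          rwa [hy₂def, neg_neg, Real.exp_log hs₀] at this
        rw [ramp_eq_zero hδpos hxe, zero_mul]
    have h6 := mul_le_mul_of_nonneg_right h5 hyp
    rw [one_mul]
    nlinarith
  -- from the integral bounds to bounds on the limit values
  have hCVm : L - ε/2 < C * Vm := by
    have h1 := mul_le_mul_of_nonneg_left hJm (div_nonneg hC.le hΓpos.le)
    have e1 : C / Real.Gamma α * (Real.Gamma α * Vm) = C * Vm := by
      field_simp
    have e2 : C / Real.Gamma α * (y₁ ^ α / α - 2 * δ₂ * Real.Gamma α)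
        = L * y₁ ^ α - 2 * δ₂ * C := by
      rw [hL, hΓ1]
      field_simp
    rw [e1, e2] at h1
    linarith [hδ1]
  have hCVp : C * Vp < L + ε/2 := by
    have h1 := mul_le_mul_of_nonneg_left hJp (div_nonneg hC.le hΓpos.le)
    have e1 : C / Real.Gamma α * (Real.Gamma α * Vp) = C * Vp := by
      field_simp
    have e2 : C / Real.Gamma α * (y₂ ^ α / α + 2 * δ₂ * Real.Gamma α)
        = L * y₂ ^ α + 2 * δ₂ * C := by
      rw [hL, hΓ1]
      field_simp
    rw [e1, e2] at h1
    linarith [hδ2]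
  -- conclude
  have hevp := hlimp.eventually_const_lt hCVm
  have hevq := hlimq.eventually_lt_const hCVp
  filter_upwards [hevp, hevq, self_mem_nhdsWithin] with t h1 h2 ht
  have ht' : (0:ℝ) < t := ht
  have htp : (0:ℝ) < t ^ α := Real.rpow_pos_of_pos ht' α
  have hs1 := sandwich_low htop hsum hpos ht' Rm hle
  have hs2 := sandwich_high htop hsum hpos ht' Rp hge
  rw [Real.dist_eq, abs_sub_lt_iff]
  constructor
  · nlinarith [mul_le_mul_of_nonneg_left hs2 htp.le]
  · nlinarith [mul_le_mul_of_nonneg_left hs1 htp.le]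


lemma main_atTop {l : ℕ → ℝ} {α C : ℝ} (htop : Tendsto l atTop atTop)
    (hsum : ∀ t : ℝ, 0 < t → Summable fun k => Real.exp (-t * l k))
    (hpos : ∀ k, 0 ≤ l k) (hα : 0 < α) (hC : 0 < C)
    (hθ : (fun t : ℝ => th l t - C * t ^ (-α)) =o[𝓝[>] (0:ℝ)] fun t : ℝ => t ^ (-α)) :
    Tendsto (fun x : ℝ => x ^ (-α) * (Nat.card {k : ℕ | l k ≤ x} : ℝ)) atTop
      (𝓝 (C / Real.Gamma (α + 1))) := by
  have h := (main htop hsum hpos hα hC hθ).comp tendsto_inv_atTop_nhdsGT_zero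
  apply h.congr'
  filter_upwards [eventually_gt_atTop (0:ℝ)] with x hx
  have h1 : (1:ℝ) / x⁻¹ = x := by field_simp
  simp only [Function.comp]
  rw [h1, Real.inv_rpow hx.le, ← Real.rpow_neg hx.le]

lemma tendsto_to_isLittleO {N : ℝ → ℝ} {α L : ℝ} (hα : 0 < α)
    (h : Tendsto (fun x => x ^ (-α) * N x) atTop (𝓝 L)) :
    (fun x => N x - L * x ^ α) =o[atTop] fun x : ℝ => x ^ α := by
  rw [isLittleO_iff_tendsto' (by
    filter_upwards [eventually_gt_atTop (0:ℝ)] with x hx h0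
    exact absurd h0 (Real.rpow_pos_of_pos hx α).ne')]
  have h2 := h.sub_const L
  rw [sub_self] at h2
  apply Tendsto.congr' _ h2
  filter_upwards [eventually_gt_atTop (0:ℝ)] with x hx
  have hxa : (0:ℝ) < x ^ α := Real.rpow_pos_of_pos hx α
  rw [Real.rpow_neg hx.le]
  field_simp

end KaramataAux

open KaramataAux

/-- **Karamata's Tauberian theorem.**  Let `(λ k)` be a nondecreasing sequence of
reals tending to `∞` whose heat trace `θ t = Σ' k, exp (−t λ k)` converges for every `t > 0`, and
let `N λ = #{k : λ k ≤ λ}` be the counting function.  If `θ(t) = C t^(−α) + o(t^(−α))` as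
`t → 0⁺` (with `α, C > 0`), then `N(λ) = (C / Γ(α+1)) λ^α + o(λ^α)` as `λ → ∞`. -/
theorem karamata_counting_of_heat_trace
    (l : ℕ → ℝ) (hmono : Monotone l) (htop : Tendsto l atTop atTop)
    (hsum : ∀ t : ℝ, 0 < t → Summable fun k => Real.exp (-t * l k))
    (α C : ℝ) (hα : 0 < α) (hC : 0 < C)
    (hθ : (fun t : ℝ => (∑' k, Real.exp (-t * l k)) - C * t ^ (-α))
        =o[nhdsWithin 0 (Set.Ioi 0)] fun t : ℝ => t ^ (-α)) :
    (fun x : ℝ => (Nat.card {k : ℕ | l k ≤ x} : ℝ) - (C / Real.Gamma (α + 1)) * x ^ α)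
      =o[atTop] fun x : ℝ => x ^ α := by
  classical
  have hθl : (fun t : ℝ => th l t - C * t ^ (-α)) =o[𝓝[>] (0:ℝ)] fun t : ℝ => t ^ (-α) := hθ
  set m : ℕ → ℝ := fun k => max (l k) 0 with hm
  have hmtop : Tendsto m atTop atTop := tendsto_atTop_mono (fun k => le_max_left _ _) htop
  have hmpos : ∀ k, 0 ≤ m k := fun k => le_max_right _ _
  have hmsum : ∀ t : ℝ, 0 < t → Summable fun k => Real.exp (-t * m k) := by
    intro t ht
    apply Summable.of_nonneg_of_le (fun k => (Real.exp_pos _).le) _ (hsum t ht)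
    intro k
    apply Real.exp_le_exp.2
    have h1 : l k ≤ m k := le_max_left _ _
    nlinarith
  -- the heat traces differ by a bounded amount near 0
  have hF : {k : ℕ | l k < 0}.Finite :=
    (finite_counting htop 0).subset (fun k hk => le_of_lt (α := ℝ) hk)
  have hdiff : ∀ t : ℝ, 0 < t → t ≤ 1 →
      |th m t - th l t| ≤ ∑ k ∈ hF.toFinset, Real.exp |l k| := by
    intro t ht ht1
    have heq : th m t - th l t = ∑ k ∈ hF.toFinset,
        (Real.exp (-t * m k) - Real.exp (-t * l k)) := by
      rw [th, th, ← Summable.tsum_sub (hmsum t ht) (hsum t ht)]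
      apply tsum_eq_sum
      intro k hk
      have hk' : ¬ l k < 0 := by simpa using hk
      push_neg at hk'
      rw [hm]
      simp only [max_eq_left hk', sub_self]
    rw [heq]
    refine (Finset.abs_sum_le_sum_abs _ _).trans ?_
    apply Finset.sum_le_sum
    intro k hk
    have hk' : l k < 0 := by simpa using hk
    have h1 : Real.exp (-t * m k) ≤ Real.exp (-t * l k) := by
      apply Real.exp_le_exp.2
      have := le_max_left (l k) 0
      rw [hm]
      nlinarith
    have h2 : 0 < Real.exp (-t * m k) := Real.exp_pos _
    have h3 : Real.exp (-t * l k) ≤ Real.exp |l k| := by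
      apply Real.exp_le_exp.2
      rw [abs_of_neg hk']
      nlinarith
    rw [abs_of_nonpos (by linarith)]
    linarith
  have hbigO : (fun t : ℝ => th m t - th l t) =O[𝓝[>] (0:ℝ)] (fun _ => (1:ℝ)) := by
    rw [isBigO_iff]
    refine ⟨∑ k ∈ hF.toFinset, Real.exp |l k|, ?_⟩
    filter_upwards [Ioc_mem_nhdsGT_of_mem (α := ℝ) ⟨le_refl 0, zero_lt_one⟩] with t ht
    rw [Real.norm_eq_abs, norm_one, mul_one]
    exact hdiff t ht.1 ht.2
  have hrpowtop : Tendsto (fun t : ℝ => ‖t ^ (-α)‖) (𝓝[>] (0:ℝ)) atTop := by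
    have h1 : Tendsto (fun t : ℝ => t ^ α) (𝓝[>] (0:ℝ)) (𝓝[>] (0:ℝ)) := by
      rw [tendsto_nhdsWithin_iff]
      constructor
      · have := (Real.continuousAt_rpow_const 0 α (Or.inr hα.le)).tendsto.mono_left
          (nhdsWithin_le_nhds (s := Set.Ioi (0:ℝ)))
        simpa [Real.zero_rpow hα.ne'] using this
      · filter_upwards [self_mem_nhdsWithin] with t ht
        exact Real.rpow_pos_of_pos ht α
    have h2 := tendsto_inv_nhdsGT_zero.comp h1
    have h3 : Tendsto (fun t : ℝ => t ^ (-α)) (𝓝[>] (0:ℝ)) atTop := by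
      apply h2.congr'
      filter_upwards [self_mem_nhdsWithin] with t ht
      have ht' : (0:ℝ) < t := ht
      simp only [Function.comp]
      rw [Real.rpow_neg ht'.le]
    exact (tendsto_abs_atTop_atTop.comp h3).congr (fun t => (Real.norm_eq_abs _).symm)
  have hlittle : (fun _ : ℝ => (1:ℝ)) =o[𝓝[>] (0:ℝ)] fun t : ℝ => t ^ (-α) :=
    isLittleO_const_left.2 (Or.inr hrpowtop)
  have hθm : (fun t : ℝ => th m t - C * t ^ (-α)) =o[𝓝[>] (0:ℝ)] fun t : ℝ => t ^ (-α) := by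
    have h4 := (hbigO.trans_isLittleO hlittle).add hθl
    exact h4.congr (fun t => by ring) (fun t => rfl)
  -- counting functions agree for nonnegative arguments
  have hmain := main_atTop hmtop hmsum hmpos hα hC hθm
  have hcount : Tendsto (fun x : ℝ => x ^ (-α) * (Nat.card {k : ℕ | l k ≤ x} : ℝ)) atTop
      (𝓝 (C / Real.Gamma (α + 1))) := by
    apply hmain.congr'
    filter_upwards [eventually_ge_atTop (0:ℝ)] with x hx
    have hset : {k : ℕ | m k ≤ x} = {k : ℕ | l k ≤ x} := by
      ext k
      simp only [Set.mem_setOf_eq, hm, max_le_iff]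
      exact ⟨fun h => h.1, fun h => ⟨h, hx⟩⟩
    rw [hset]
  exact tendsto_to_isLittleO hα hcount
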